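/- arXiv:1608.06784 — 3 statements merged into one kernel-verified Lean document; each statement's English description precedes it below -/
import Mathlib

section
/- Let A ∈ SU(2) with trace x and let g be a 3×3 signed permutation matrix. Then the coefficients of the characteristic polynomial det(tI − A⊗g) = ∑_{i=0}^{6} c_i tⁱ satisfy: c₀ = c₆ = 1; c₁ = c₅ = −tr(g)·x; c₂ = c₄ = tr(g²) + (x²/2)(tr(g)² − tr(g²)); c₃ = −(1/3)(tr(g)³ − tr(g³) − 6 det(g))·x − det(g)·x³. -/
open Matrix Kronecker

/-- `g` is a complex `3 × 3` signed permutation matrix: exactly one nonzero entry, equal to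
`±1`, in each row and column. -/
def IsSignedPermC (g : Matrix (Fin 3) (Fin 3) ℂ) : Prop :=
  ∃ σ : Equiv.Perm (Fin 3), ∃ ε : Fin 3 → ℤˣ,
    ∀ i j, g i j = if i = σ j then ((ε j : ℤ) : ℂ) else 0

namespace Stmt13Aux

open Polynomial

/-- The second elementary symmetric function of a `3 × 3` matrix (sum of principal
`2 × 2` minors). -/
noncomputable def e2 (M : Matrix (Fin 3) (Fin 3) ℂ) : ℂ :=
  M 0 0 * M 1 1 - M 0 1 * M 1 0 + M 0 0 * M 2 2 - M 0 2 * M 2 0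
    + M 1 1 * M 2 2 - M 1 2 * M 2 1

lemma charpoly_fin3 (M : Matrix (Fin 3) (Fin 3) ℂ) :
    M.charpoly = X ^ 3 - C M.trace * X ^ 2 + C (e2 M) * X - C M.det := by
  rw [Matrix.charpoly, Matrix.det_fin_three]
  simp only [Matrix.charmatrix_apply, Matrix.one_apply, Matrix.diagonal_apply,
    Matrix.trace_fin_three, Matrix.det_fin_three, e2, map_add, map_sub, _root_.map_mul,
    smul_eq_mul, mul_ite, mul_one, mul_zero]
  norm_num [Fin.ext_iff]
  ring

lemma trace_sq_fin3 (M : Matrix (Fin 3) (Fin 3) ℂ) :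
    (M * M).trace = M.trace ^ 2 - 2 * e2 M := by
  simp only [Matrix.trace_fin_three, Matrix.mul_apply, Fin.sum_univ_three, e2]
  ring

lemma trace_cube_fin3 (M : Matrix (Fin 3) (Fin 3) ℂ) :
    (M * M * M).trace = M.trace ^ 3 - 3 * M.trace * e2 M + 3 * M.det := by
  simp only [Matrix.trace_fin_three, Matrix.mul_apply, Fin.sum_univ_three, e2,
    Matrix.det_fin_three]
  ring

lemma trace_adjugate_fin3 (M : Matrix (Fin 3) (Fin 3) ℂ) :
    (adjugate M).trace = e2 M := by
  rw [Matrix.adjugate_fin_three, Matrix.trace_fin_three_of, e2]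
  ring

lemma e2_smul (c : ℂ) (M : Matrix (Fin 3) (Fin 3) ℂ) : e2 (c • M) = c ^ 2 * e2 M := by
  simp only [e2, Matrix.smul_apply, smul_eq_mul]; ring

/-- The reindexing equivalence identifying `Fin 2 × Fin 3` with `Fin 3 ⊕ Fin 3`. -/
def eqv : (Fin 3 ⊕ Fin 3) ≃ (Fin 2 × Fin 3) where
  toFun := Sum.elim (fun j => (0, j)) (fun j => (1, j))
  invFun p := if p.1 = 0 then Sum.inl p.2 else Sum.inr p.2
  left_inv := by rintro (j|j) <;> simp
  right_inv := by rintro ⟨i, j⟩; fin_cases i <;> simp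

lemma kron_blocks (A : Matrix (Fin 2) (Fin 2) ℂ) (g : Matrix (Fin 3) (Fin 3) ℂ) :
    (A ⊗ₖ g).submatrix eqv eqv
      = fromBlocks (A 0 0 • g) (A 0 1 • g) (A 1 0 • g) (A 1 1 • g) := by
  ext (i|i) (j|j) <;>
    simp [eqv, Matrix.submatrix_apply, Matrix.kroneckerMap_apply, Matrix.fromBlocks]

/-- Determinant of a 2×2 block matrix whose lower blocks commute, assuming the
lower-right block has nonzero determinant. -/
lemma det_blocks_comm {R : Type*} [CommRing R] [IsDomain R]
    (P Q Rm S : Matrix (Fin 3) (Fin 3) R) (hRS : Rm * S = S * Rm) (hdS : det S ≠ 0) :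
    det (fromBlocks P Q Rm S) = det (P * S - Q * Rm) := by
  have hSmul : fromBlocks P Q Rm S * fromBlocks S 0 (-Rm) 1
      = fromBlocks (P * S - Q * Rm) Q 0 S := by
    rw [Matrix.fromBlocks_multiply]
    simp only [Matrix.mul_zero, Matrix.mul_one, zero_add, Matrix.mul_neg, hRS,
      add_neg_cancel, sub_eq_add_neg]
  have h := congrArg det hSmul
  rw [Matrix.det_mul, Matrix.det_fromBlocks_zero₁₂, Matrix.det_fromBlocks_zero₂₁,
    Matrix.det_one, mul_one] at h
  exact mul_right_cancel₀ hdS h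

lemma det_blocks (g : Matrix (Fin 3) (Fin 3) ℂ) (a b c d l m : ℂ)
    (h1 : a * d - b * c = l * m) (h2 : a + d = l + m) :
    det (fromBlocks (charmatrix (a • g)) (-((b • g).map C)) (-((c • g).map C))
        (charmatrix (d • g)))
      = (l • g).charpoly * (m • g).charpoly := by
  set G : Matrix (Fin 3) (Fin 3) ℂ[X] := g.map C with hG
  have hmap : ∀ c : ℂ, (c • g).map C = (C c : ℂ[X]) • G := by
    intro c; ext i j; simp [hG]
  have hcm : ∀ c : ℂ, charmatrix (c • g)
      = (X : ℂ[X]) • (1 : Matrix (Fin 3) (Fin 3) ℂ[X]) - (C c : ℂ[X]) • G := by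
    intro c
    have h : charmatrix (c • g) = Matrix.scalar (Fin 3) (X : ℂ[X]) - (c • g).map C := rfl
    rw [h, hmap]
    congr 1
    simp [Matrix.scalar_apply, Matrix.smul_eq_diagonal_mul]
  have hneg : ∀ c : ℂ, -((c • g).map C)
      = (0 : ℂ[X]) • (1 : Matrix (Fin 3) (Fin 3) ℂ[X]) - (C c : ℂ[X]) • G := by
    intro c; rw [hmap]; simp
  rw [hcm, hcm, hneg, hneg]
  have expand : ∀ u v w z : ℂ[X],
      ((u • (1 : Matrix (Fin 3) (Fin 3) ℂ[X]) - v • G) * (w • 1 - z • G))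
      = (u * w) • 1 - (u * z + v * w) • G + (v * z) • (G * G) := by
    intro u v w z
    simp only [Matrix.mul_sub, Matrix.sub_mul, smul_mul_assoc, Matrix.mul_smul, smul_smul,
      Matrix.one_mul, Matrix.mul_one]
    module
  set P := (X : ℂ[X]) • (1 : Matrix (Fin 3) (Fin 3) ℂ[X]) - (C a : ℂ[X]) • G with hP
  set Q := (0 : ℂ[X]) • (1 : Matrix (Fin 3) (Fin 3) ℂ[X]) - (C b : ℂ[X]) • G with hQ
  set R := (0 : ℂ[X]) • (1 : Matrix (Fin 3) (Fin 3) ℂ[X]) - (C c : ℂ[X]) • G with hR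
  set S := (X : ℂ[X]) • (1 : Matrix (Fin 3) (Fin 3) ℂ[X]) - (C d : ℂ[X]) • G with hS
  have hPS : P * S - Q * R
      = ((X : ℂ[X]) • (1 : Matrix (Fin 3) (Fin 3) ℂ[X]) - (C l : ℂ[X]) • G)
        * ((X : ℂ[X]) • 1 - (C m : ℂ[X]) • G) := by
    rw [hP, hQ, hR, hS, expand, expand, expand]
    have e1 : (C a : ℂ[X]) * C d - C b * C c = C l * C m := by
      rw [← _root_.map_mul, ← _root_.map_mul, ← _root_.map_mul, ← map_sub, h1]
    have e2 : (C a : ℂ[X]) + C d = C l + C m := by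
      rw [← map_add, ← map_add, h2]
    match_scalars
    · ring
    · linear_combination (-(X : ℂ[X])) * e2
    · linear_combination e1
  have hdetS : det S ≠ 0 := by
    have h : S = charmatrix (d • g) := (hcm d).symm
    rw [h, ← Matrix.charpoly]
    exact (Matrix.charpoly_monic _).ne_zero
  have hRS : R * S = S * R := by
    rw [hR, hS, expand, expand]
    match_scalars <;> ring
  have hfin : det (fromBlocks P Q R S) = det (P * S - Q * R) :=
    det_blocks_comm P Q R S hRS hdetS
  rw [hfin, hPS, Matrix.det_mul, Matrix.charpoly, Matrix.charpoly, hcm l, hcm m]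

lemma charpoly_kron (A : Matrix (Fin 2) (Fin 2) ℂ) (g : Matrix (Fin 3) (Fin 3) ℂ)
    (x l m : ℂ) (hdet : A.det = 1) (hx : A.trace = x) (hl : l + m = x) (hlm : l * m = 1) :
    (A ⊗ₖ g).charpoly = (l • g).charpoly * (m • g).charpoly := by
  have h1 : (A ⊗ₖ g).charpoly
      = (fromBlocks (A 0 0 • g) (A 0 1 • g) (A 1 0 • g) (A 1 1 • g)).charpoly := by
    rw [← kron_blocks]
    have h := Matrix.charpoly_reindex (eqv.symm) (A ⊗ₖ g)
    simpa [Matrix.reindex_apply] using h.symm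
  rw [h1, Matrix.charpoly, Matrix.charmatrix_fromBlocks]
  apply det_blocks
  · rw [Matrix.det_fin_two] at hdet; rw [hdet, hlm]
  · rw [Matrix.trace_fin_two] at hx; rw [hx, hl]

lemma prod_cubics (t1 e1 d1 t2 e2 d2 : ℂ) :
    ((X : ℂ[X]) ^ 3 - C t1 * X ^ 2 + C e1 * X - C d1)
      * (X ^ 3 - C t2 * X ^ 2 + C e2 * X - C d2)
    = X ^ 6 - C (t1 + t2) * X ^ 5 + C (e1 + e2 + t1 * t2) * X ^ 4
      - C (d1 + d2 + t1 * e2 + t2 * e1) * X ^ 3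
      + C (t1 * d2 + t2 * d1 + e1 * e2) * X ^ 2
      - C (e1 * d2 + e2 * d1) * X + C (d1 * d2) := by
  simp only [map_add, _root_.map_mul]
  ring

lemma signed_orth {g : Matrix (Fin 3) (Fin 3) ℂ} (hg : IsSignedPermC g) :
    gᵀ * g = 1 := by
  obtain ⟨σ, ε, h⟩ := hg
  ext j k
  simp only [Matrix.mul_apply, Matrix.transpose_apply, h, ite_mul, zero_mul, mul_ite, mul_zero]
  rcases eq_or_ne j k with rfl | hjk
  · simp only [← ite_and, and_self]
    rw [Finset.sum_ite_eq' Finset.univ (σ j) (fun _ => ((ε j : ℤ) : ℂ) * ((ε j : ℤ) : ℂ))]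
    have h1 : ((ε j : ℤ) : ℂ) * ((ε j : ℤ) : ℂ) = ((((ε j) * (ε j) : ℤˣ) : ℤ) : ℂ) := by
      push_cast; ring
    rw [Matrix.one_apply_eq]
    simp [h1, Int.units_mul_self]
  · have hne : σ j ≠ σ k := fun hc => hjk (σ.injective hc)
    rw [Matrix.one_apply_ne hjk]
    apply Finset.sum_eq_zero
    intro i _
    by_cases h1 : i = σ j
    · subst h1; simp [hne]
    · simp [h1]

lemma signed_det_sq {g : Matrix (Fin 3) (Fin 3) ℂ} (hg : IsSignedPermC g) :
    g.det ^ 2 = 1 := by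
  have h := congrArg det (signed_orth hg)
  rw [Matrix.det_mul, Matrix.det_transpose, Matrix.det_one] at h
  rw [sq]; exact h

lemma signed_adjugate {g : Matrix (Fin 3) (Fin 3) ℂ} (hg : IsSignedPermC g) :
    adjugate g = g.det • gᵀ := by
  have h := Matrix.mul_adjugate g
  have h2 := congrArg (fun M => gᵀ * M) h
  rw [← Matrix.mul_assoc, signed_orth hg, Matrix.one_mul] at h2
  rw [h2, Matrix.mul_smul, Matrix.mul_one]

lemma signed_e2 {g : Matrix (Fin 3) (Fin 3) ℂ} (hg : IsSignedPermC g) :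
    e2 g = g.det * g.trace := by
  rw [← trace_adjugate_fin3, signed_adjugate hg, Matrix.trace_smul, Matrix.trace_transpose,
    smul_eq_mul]

end Stmt13Aux

open Stmt13Aux Polynomial in
/-- For `A ∈ SU(2)` with trace `x` and `g` a `3 × 3` signed permutation matrix, the
coefficients `cᵢ` of the characteristic polynomial `det(tI − A ⊗ g) = ∑ cᵢ tⁱ` are:
`c₀ = c₆ = 1`, `c₁ = c₅ = −tr(g)·x`, `c₂ = c₄ = tr(g²) + (x²/2)(tr(g)² − tr(g²))`, and
`c₃ = −(1/3)(tr(g)³ − tr(g³) − 6 det g)·x − det(g)·x³`. -/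
theorem stmt13 (A : Matrix (Fin 2) (Fin 2) ℂ)
    (hA : A ∈ Matrix.unitaryGroup (Fin 2) ℂ) (hdet : A.det = 1)
    (x : ℂ) (hx : A.trace = x)
    (g : Matrix (Fin 3) (Fin 3) ℂ) (hg : IsSignedPermC g) :
    ((A ⊗ₖ g).charpoly.coeff 0 = 1) ∧
    ((A ⊗ₖ g).charpoly.coeff 6 = 1) ∧
    ((A ⊗ₖ g).charpoly.coeff 1 = -(g.trace) * x) ∧
    ((A ⊗ₖ g).charpoly.coeff 5 = -(g.trace) * x) ∧
    ((A ⊗ₖ g).charpoly.coeff 2 =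
      (g * g).trace + x ^ 2 / 2 * (g.trace ^ 2 - (g * g).trace)) ∧
    ((A ⊗ₖ g).charpoly.coeff 4 =
      (g * g).trace + x ^ 2 / 2 * (g.trace ^ 2 - (g * g).trace)) ∧
    ((A ⊗ₖ g).charpoly.coeff 3 =
      -(1 / 3) * (g.trace ^ 3 - (g * g * g).trace - 6 * g.det) * x - g.det * x ^ 3) := by
  -- get a square root of x^2 - 4 and the two "eigenvalues" l, m
  obtain ⟨s, hs⟩ : ∃ s : ℂ, s ^ 2 = x ^ 2 - 4 :=
    IsAlgClosed.exists_pow_nat_eq (x ^ 2 - 4) two_pos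
  obtain ⟨l, m, hl, hlm⟩ : ∃ l m : ℂ, l + m = x ∧ l * m = 1 :=
    ⟨(x + s) / 2, (x - s) / 2, by ring, by field_simp; linear_combination -hs⟩
  set T := g.trace with hT
  set E := e2 g with hE
  set D := g.det with hD
  have hED : E = D * T := signed_e2 hg
  have hD2 : D ^ 2 = 1 := signed_det_sq hg
  have htr2 : (g * g).trace = T ^ 2 - 2 * E := trace_sq_fin3 g
  have htr3 : (g * g * g).trace = T ^ 3 - 3 * T * E + 3 * D := trace_cube_fin3 g
  have hcp : (A ⊗ₖ g).charpoly
      = X ^ 6 - C (l * T + m * T) * X ^ 5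
        + C (l ^ 2 * E + m ^ 2 * E + (l * T) * (m * T)) * X ^ 4
        - C (l ^ 3 * D + m ^ 3 * D + (l * T) * (m ^ 2 * E) + (m * T) * (l ^ 2 * E)) * X ^ 3
        + C ((l * T) * (m ^ 3 * D) + (m * T) * (l ^ 3 * D) + (l ^ 2 * E) * (m ^ 2 * E)) * X ^ 2
        - C ((l ^ 2 * E) * (m ^ 3 * D) + (m ^ 2 * E) * (l ^ 3 * D)) * X
        + C ((l ^ 3 * D) * (m ^ 3 * D)) := by
    rw [charpoly_kron A g x l m hdet hx hl hlm, charpoly_fin3, charpoly_fin3]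
    rw [Matrix.trace_smul, Matrix.trace_smul, Matrix.det_smul, Matrix.det_smul,
      e2_smul, e2_smul]
    simp only [smul_eq_mul, Fintype.card_fin, ← hT, ← hE, ← hD]
    rw [prod_cubics]
  have h2 : l ^ 2 + m ^ 2 = x ^ 2 - 2 := by
    linear_combination (l + m + x) * hl - 2 * hlm
  have h3 : l ^ 3 + m ^ 3 = x ^ 3 - 3 * x := by
    linear_combination ((l + m) ^ 2 + (l + m) * x + x ^ 2 - 3) * hl - 3 * (l + m) * hlm
  rw [htr2, htr3]
  refine ⟨?_, ?_, ?_, ?_, ?_, ?_, ?_⟩ <;>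
    rw [hcp] <;>
    simp only [Polynomial.coeff_add, Polynomial.coeff_sub, Polynomial.coeff_C_mul,
      Polynomial.coeff_X_pow, Polynomial.coeff_C, Polynomial.coeff_X] <;>
    norm_num
  · -- coeff 0 : l³m³D² = 1
    linear_combination (l ^ 2 * m ^ 2 * D ^ 2 + l * m * D ^ 2 + D ^ 2) * hlm + hD2
  · -- coeff 1 : -(l²E m³D + m²E l³D) = -T x
    linear_combination (-(E * D) * (l * m * (l + m) + (l + m) + x)) * hlm
      - E * D * hl - x * D * hED - x * T * hD2 + E * D * x * hlm
  · -- coeff 5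
    linear_combination -T * hl
  · -- coeff 2
    have q1 : l * T * (m ^ 3 * D) + m * T * (l ^ 3 * D) = T * D * (x ^ 2 - 2) := by
      linear_combination T * D * (l ^ 2 + m ^ 2) * hlm + T * D * h2
    have q2 : l ^ 2 * E * (m ^ 2 * E) = E ^ 2 := by
      linear_combination E ^ 2 * (l * m + 1) * hlm
    linear_combination q1 + q2 + (2 - x ^ 2 + E + D * T) * hED + T ^ 2 * hD2
  · -- coeff 4
    linear_combination E * h2 + T ^ 2 * hlm
  · -- coeff 3
    linear_combination (-D) * h3 - T * E * ((l + m) * hlm + hl)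
end

section
/- Conjugation by the above matrix g ∈ USp(6) sends the block matrix P = [[0,I,0],[I,0,0],[0,0,I]] (2×2 blocks) to the block matrix D = [[−I,0,0],[0,I,0],[0,0,I]]. Consequently the subgroups G₂ = ⟨SU(2)₃, P⟩ and G₃ = ⟨SU(2)₃, D⟩ of USp(6) are conjugate in USp(6). -/
open Matrix

/-- The explicit matrix `g`, viewed as a complex `6 × 6` matrix. -/
noncomputable def gC : Matrix (Fin 6) (Fin 6) ℂ :=
  !![0, ((Real.sqrt 2 : ℝ) : ℂ)⁻¹, 0, -((Real.sqrt 2 : ℝ) : ℂ)⁻¹, 0, 0;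
     -((Real.sqrt 2 : ℝ) : ℂ)⁻¹, 0, ((Real.sqrt 2 : ℝ) : ℂ)⁻¹, 0, 0, 0;
     0, -((Real.sqrt 2 : ℝ) : ℂ)⁻¹, 0, -((Real.sqrt 2 : ℝ) : ℂ)⁻¹, 0, 0;
     ((Real.sqrt 2 : ℝ) : ℂ)⁻¹, 0, ((Real.sqrt 2 : ℝ) : ℂ)⁻¹, 0, 0, 0;
     0, 0, 0, 0, 0, 1;
     0, 0, 0, 0, -1, 0]

/-- The symplectic form `J`, block-diagonal with three blocks `[[0,1],[−1,0]]`. -/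
def JC : Matrix (Fin 6) (Fin 6) ℂ :=
  !![0, 1, 0, 0, 0, 0;
     -1, 0, 0, 0, 0, 0;
     0, 0, 0, 1, 0, 0;
     0, 0, -1, 0, 0, 0;
     0, 0, 0, 0, 0, 1;
     0, 0, 0, 0, -1, 0]

/-- The block matrix `P = [[0,I,0],[I,0,0],[0,0,I]]` (in `2 × 2` blocks). -/
def PMat : Matrix (Fin 6) (Fin 6) ℂ :=
  !![0, 0, 1, 0, 0, 0;
     0, 0, 0, 1, 0, 0;
     1, 0, 0, 0, 0, 0;
     0, 1, 0, 0, 0, 0;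
     0, 0, 0, 0, 1, 0;
     0, 0, 0, 0, 0, 1]

/-- The block matrix `D = [[−I,0,0],[0,I,0],[0,0,I]]` (in `2 × 2` blocks). -/
def DMat : Matrix (Fin 6) (Fin 6) ℂ :=
  !![-1, 0, 0, 0, 0, 0;
     0, -1, 0, 0, 0, 0;
     0, 0, 1, 0, 0, 0;
     0, 0, 0, 1, 0, 0;
     0, 0, 0, 0, 1, 0;
     0, 0, 0, 0, 0, 1]

/-- `diag₃(M)` for `M = [[a, b], [c, d]]`. -/
def diag3C (a b c d : ℂ) : Matrix (Fin 6) (Fin 6) ℂ :=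
  !![a, b, 0, 0, 0, 0;
     c, d, 0, 0, 0, 0;
     0, 0, a, b, 0, 0;
     0, 0, c, d, 0, 0;
     0, 0, 0, 0, a, b;
     0, 0, 0, 0, c, d]

/-- The diagonally embedded `SU(2)₃ ⊂ USp(6)`. -/
def SU23set : Set (Matrix (Fin 6) (Fin 6) ℂ) :=
  {N | ∃ a b c d : ℂ,
    (!![a, b; c, d])ᴴ * !![a, b; c, d] = 1 ∧ a * d - b * c = 1 ∧ N = diag3C a b c d}

/-- The group `G₂ = ⟨SU(2)₃, P⟩`. -/
def G2 : Submonoid (Matrix (Fin 6) (Fin 6) ℂ) := Submonoid.closure (SU23set ∪ {PMat})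

/-- The group `G₃ = ⟨SU(2)₃, D⟩`. -/
def G3 : Submonoid (Matrix (Fin 6) (Fin 6) ℂ) := Submonoid.closure (SU23set ∪ {DMat})

section cvaux
variable {α : Type*} (x : α)
@[simp] lemma cv2_1 (u : Fin 1 → α) : vecCons x u 1 = u 0 := rfl
@[simp] lemma cv3_1 (u : Fin 2 → α) : vecCons x u 1 = u 0 := rfl
@[simp] lemma cv3_2 (u : Fin 2 → α) : vecCons x u 2 = u 1 := rfl
@[simp] lemma cv4_1 (u : Fin 3 → α) : vecCons x u 1 = u 0 := rfl
@[simp] lemma cv4_2 (u : Fin 3 → α) : vecCons x u 2 = u 1 := rfl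
@[simp] lemma cv4_3 (u : Fin 3 → α) : vecCons x u 3 = u 2 := rfl
@[simp] lemma cv5_1 (u : Fin 4 → α) : vecCons x u 1 = u 0 := rfl
@[simp] lemma cv5_2 (u : Fin 4 → α) : vecCons x u 2 = u 1 := rfl
@[simp] lemma cv5_3 (u : Fin 4 → α) : vecCons x u 3 = u 2 := rfl
@[simp] lemma cv5_4 (u : Fin 4 → α) : vecCons x u 4 = u 3 := rfl
@[simp] lemma cv6_1 (u : Fin 5 → α) : vecCons x u 1 = u 0 := rfl
@[simp] lemma cv6_2 (u : Fin 5 → α) : vecCons x u 2 = u 1 := rfl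
@[simp] lemma cv6_3 (u : Fin 5 → α) : vecCons x u 3 = u 2 := rfl
@[simp] lemma cv6_4 (u : Fin 5 → α) : vecCons x u 4 = u 3 := rfl
@[simp] lemma cv6_5 (u : Fin 5 → α) : vecCons x u 5 = u 4 := rfl
@[simp] lemma vhead_const {n : ℕ} : vecHead (fun _ : Fin (n+1) => x) = x := rfl
@[simp] lemma vtail_const {n : ℕ} : vecTail (fun _ : Fin (n+2) => x) = fun _ => x := rfl
end cvaux

lemma hs2 : ((Real.sqrt 2 : ℝ) : ℂ) ^ 2 = 2 := by
  norm_num [sq, ← Complex.ofReal_mul, Real.mul_self_sqrt]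

lemma hr2 : ((Real.sqrt 2 : ℝ) : ℂ)⁻¹ ^ 2 = 2⁻¹ := by
  rw [inv_pow, hs2]

set_option maxHeartbeats 2000000 in
lemma g_unitL : gCᴴ * gC = 1 := by
  ext i j
  fin_cases i <;> fin_cases j <;>
    simp [gC, Matrix.mul_apply, Fin.sum_univ_succ, Matrix.conjTranspose_apply,
        Matrix.cons_val_succ, Matrix.one_apply] <;>
    (ring_nf; try simp [hs2, hr2]; try ring)

set_option maxHeartbeats 2000000 in
lemma g_unitR : gC * gCᴴ = 1 := by
  ext i j
  fin_cases i <;> fin_cases j <;>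
    simp [gC, Matrix.mul_apply, Fin.sum_univ_succ, Matrix.conjTranspose_apply,
        Matrix.cons_val_succ, Matrix.one_apply] <;>
    (ring_nf; try simp [hs2, hr2]; try ring)

lemma g_inv : gC⁻¹ = gCᴴ := Matrix.inv_eq_left_inv g_unitL

set_option maxHeartbeats 2000000 in
lemma g_symp : gCᵀ * JC * gC = JC := by
  ext i j
  fin_cases i <;> fin_cases j <;>
    simp [gC, JC, Matrix.mul_apply, Fin.sum_univ_succ, Matrix.transpose_apply,
        Matrix.cons_val_succ] <;>
    (ring_nf; try simp [hs2, hr2]; try ring)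

set_option maxHeartbeats 2000000 in
lemma g_P : gC * PMat * gCᴴ = DMat := by
  ext i j
  fin_cases i <;> fin_cases j <;>
    simp [gC, PMat, DMat, Matrix.mul_apply, Fin.sum_univ_succ, Matrix.conjTranspose_apply,
        Matrix.cons_val_succ] <;>
    (ring_nf; try simp [hs2, hr2]; try ring)

set_option maxHeartbeats 4000000 in
lemma g_conj (a b c d : ℂ) :
    gC * diag3C a b c d * gCᴴ = diag3C d (-c) (-b) a := by
  ext i j
  fin_cases i <;> fin_cases j <;>
    simp [gC, diag3C, Matrix.mul_apply, Fin.sum_univ_succ, Matrix.conjTranspose_apply,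
        Matrix.cons_val_succ] <;>
    (ring_nf; try simp [hs2, hr2]; try ring_nf; try simp [hs2, hr2]; try ring)

lemma su2_aux (a b c d : ℂ) (h : (!![a, b; c, d])ᴴ * !![a, b; c, d] = 1) :
    (!![d, -c; -b, a])ᴴ * !![d, -c; -b, a] = 1 := by
  have e00 := Matrix.ext_iff.mpr h 0 0
  have e01 := Matrix.ext_iff.mpr h 0 1
  have e10 := Matrix.ext_iff.mpr h 1 0
  have e11 := Matrix.ext_iff.mpr h 1 1
  simp [Matrix.mul_apply, Fin.sum_univ_two, Matrix.conjTranspose_apply,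
    Matrix.one_apply] at e00 e01 e10 e11
  ext i j
  fin_cases i <;> fin_cases j <;>
    simp [Matrix.mul_apply, Fin.sum_univ_two, Matrix.conjTranspose_apply,
      Matrix.one_apply, map_neg] <;>
    first
      | linear_combination e00
      | linear_combination e11
      | linear_combination e01
      | linear_combination e10
      | linear_combination -e01
      | linear_combination -e10
      | linear_combination e01 + e10
      | linear_combination -e01 - e10

/-- Conjugation by `g` as a monoid hom. -/
noncomputable def conjHom : Matrix (Fin 6) (Fin 6) ℂ →* Matrix (Fin 6) (Fin 6) ℂ where
  toFun A := gC * A * gCᴴ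
  map_one' := by
    show gC * 1 * gCᴴ = 1
    rw [mul_one, g_unitR]
  map_mul' A B := by
    show gC * (A * B) * gCᴴ = (gC * A * gCᴴ) * (gC * B * gCᴴ)
    simp only [Matrix.mul_assoc]
    rw [← Matrix.mul_assoc gCᴴ gC, g_unitL, Matrix.one_mul]

lemma conj_SU23 : ⇑conjHom '' SU23set = SU23set := by
  apply Set.Subset.antisymm
  · rintro _ ⟨N, ⟨a, b, c, d, h1, h2, rfl⟩, rfl⟩
    exact ⟨d, -c, -b, a, su2_aux a b c d h1, by linear_combination h2,
      by exact g_conj a b c d⟩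
  · rintro N ⟨a, b, c, d, h1, h2, rfl⟩
    refine ⟨diag3C d (-c) (-b) a, ⟨d, -c, -b, a, su2_aux a b c d h1,
      by linear_combination h2, rfl⟩, ?_⟩
    show gC * diag3C d (-c) (-b) a * gCᴴ = diag3C a b c d
    rw [g_conj]
    simp

/-- `g` lies in `USp(6)` and conjugation by `g` sends `P` to `D`; consequently the
subgroups `G₂ = ⟨SU(2)₃, P⟩` and `G₃ = ⟨SU(2)₃, D⟩` are conjugate in `USp(6)`. -/
theorem stmt17 :
    gCᴴ * gC = 1 ∧ gCᵀ * JC * gC = JC ∧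
    gC * PMat * gC⁻¹ = DMat ∧
    (fun A => gC * A * gC⁻¹) '' (G2 : Set (Matrix (Fin 6) (Fin 6) ℂ)) =
      (G3 : Set (Matrix (Fin 6) (Fin 6) ℂ)) := by
  refine ⟨g_unitL, g_symp, by rw [g_inv]; exact g_P, ?_⟩
  have hfun : (fun A => gC * A * gC⁻¹) = ⇑conjHom := by
    funext A; rw [g_inv]; rfl
  rw [hfun]
  calc ⇑conjHom '' (G2 : Set (Matrix (Fin 6) (Fin 6) ℂ))
      = ((G2.map conjHom : Submonoid (Matrix (Fin 6) (Fin 6) ℂ)) : Set _) :=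
        (Submonoid.coe_map _ _).symm
    _ = ((Submonoid.closure (⇑conjHom '' (SU23set ∪ {PMat})) :
          Submonoid (Matrix (Fin 6) (Fin 6) ℂ)) : Set _) := by
        rw [show G2 = Submonoid.closure (SU23set ∪ {PMat}) from rfl,
          MonoidHom.map_mclosure]
    _ = (G3 : Set (Matrix (Fin 6) (Fin 6) ℂ)) := by
        rw [Set.image_union, Set.image_singleton, conj_SU23,
          show conjHom PMat = DMat from g_P]
        rfl
end

section
/- Let G be a compact group, η the character of a 2-dimensional unitary representation of G with ⟨η,η⟩ = 1, and ψ : G → ℂ^× a continuous homomorphism (1-dimensional character) such that ∫_G ψⁿ η^k dg = 0 and ∫_G ψ̄ⁿ η^k dg = 0 for all n > 0, k ≥ 0. Set χ = 2ψ + 2ψ̄ + η. Then ∫_G χ⁴ dg = 144 + ∫_G η⁴ dg, and since |η(g)| ≤ 2 for all g, ∫_G χ⁴ dg ≤ 160. In particular ∫_G χ⁴ dg ≠ 162. -/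
open MeasureTheory

/-- Let `G` be a compact group with normalized Haar measure, `ψ` a continuous 1-dimensional
unitary character, `η` a real-valued continuous character of norm 1 (⟨η,η⟩ = 1) bounded by 2,
such that `∫ ψⁿ η^k = ∫ ψ̄ⁿ η^k = 0` for all `n > 0`, `k ≥ 0`. Then `χ = 2ψ + 2ψ̄ + η`
satisfies `∫ χ⁴ = 144 + ∫ η⁴ ≤ 160`; in particular `∫ χ⁴ ≠ 162`. -/
theorem stmt18 {G : Type*} [Group G] [TopologicalSpace G] [IsTopologicalGroup G]
    [CompactSpace G] [MeasurableSpace G] [BorelSpace G]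
    (μ : Measure G) [μ.IsHaarMeasure] [IsProbabilityMeasure μ]
    (ψ : G → ℂ) (η : G → ℝ)
    (hψc : Continuous ψ) (hηc : Continuous η)
    (hψhom : ∀ g h : G, ψ (g * h) = ψ g * ψ h)
    (hψu : ∀ g : G, ψ g * (starRingEnd ℂ) (ψ g) = 1)
    (hη2 : ∫ g, (η g) ^ 2 ∂μ = 1)
    (hηb : ∀ g : G, |η g| ≤ 2)
    (hvanψ : ∀ n : ℕ, 0 < n → ∀ k : ℕ,
      ∫ g, (ψ g) ^ n * ((η g : ℂ)) ^ k ∂μ = 0)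
    (hvanψbar : ∀ n : ℕ, 0 < n → ∀ k : ℕ,
      ∫ g, ((starRingEnd ℂ) (ψ g)) ^ n * ((η g : ℂ)) ^ k ∂μ = 0)
    (χ : G → ℂ)
    (hχ : ∀ g : G, χ g = 2 * ψ g + 2 * (starRingEnd ℂ) (ψ g) + (η g : ℂ)) :
    (∫ g, (χ g) ^ 4 ∂μ = 144 + ((∫ g, (η g) ^ 4 ∂μ : ℝ) : ℂ)) ∧
    (∫ g, (χ g) ^ 4 ∂μ).re ≤ 160 ∧
    (∫ g, (χ g) ^ 4 ∂μ) ≠ 162 := by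
  have hint : ∀ f : G → ℂ, Continuous f → Integrable f μ := fun f hf =>
    hf.integrable_of_hasCompactSupport (HasCompactSupport.of_compactSpace f)
  have hec : Continuous (fun g : G => ((η g : ℂ))) := Complex.continuous_ofReal.comp hηc
  have hconjc : Continuous (fun g : G => (starRingEnd ℂ) (ψ g)) := continuous_star.comp hψc
  set A : G → ℂ := fun g => (96 * ((ψ g) ^ 1 * ((η g : ℂ)) ^ 1) + 8 * ((ψ g) ^ 1 * ((η g : ℂ)) ^ 3))
      + (64 * ((ψ g) ^ 2 * ((η g : ℂ)) ^ 0) + 24 * ((ψ g) ^ 2 * ((η g : ℂ)) ^ 2))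
      + (32 * ((ψ g) ^ 3 * ((η g : ℂ)) ^ 1) + 16 * ((ψ g) ^ 4 * ((η g : ℂ)) ^ 0)) with hA
  set B : G → ℂ := fun g => (96 * (((starRingEnd ℂ) (ψ g)) ^ 1 * ((η g : ℂ)) ^ 1)
        + 8 * (((starRingEnd ℂ) (ψ g)) ^ 1 * ((η g : ℂ)) ^ 3))
      + (64 * (((starRingEnd ℂ) (ψ g)) ^ 2 * ((η g : ℂ)) ^ 0)
        + 24 * (((starRingEnd ℂ) (ψ g)) ^ 2 * ((η g : ℂ)) ^ 2))
      + (32 * (((starRingEnd ℂ) (ψ g)) ^ 3 * ((η g : ℂ)) ^ 1)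
        + 16 * (((starRingEnd ℂ) (ψ g)) ^ 4 * ((η g : ℂ)) ^ 0)) with hB
  set C : G → ℂ := fun g => 96 + 48 * ((η g : ℂ)) ^ 2 + ((η g : ℂ)) ^ 4 with hC
  have hAc : Continuous A := by rw [hA]; fun_prop
  have hBc : Continuous B := by rw [hB]; fun_prop
  have hCc : Continuous C := by rw [hC]; fun_prop
  have hpt : ∀ g, (χ g) ^ 4 = C g + A g + B g := by
    intro g
    have hp : ψ g ≠ 0 := by
      intro h
      have := hψu g
      rw [h] at this
      simp at this
    have hq : (starRingEnd ℂ) (ψ g) = (ψ g)⁻¹ := (inv_eq_of_mul_eq_one_right (hψu g)).symm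
    rw [hχ g]
    simp only [hA, hB, hC, hq]
    field_simp
    ring
  have hAint : ∫ g, A g ∂μ = 0 := by
    have e11 := hvanψ 1 one_pos 1
    have e13 := hvanψ 1 one_pos 3
    have e20 := hvanψ 2 two_pos 0
    have e22 := hvanψ 2 two_pos 2
    have e31 := hvanψ 3 three_pos 1
    have e40 := hvanψ 4 four_pos 0
    have i11 : Integrable (fun g : G => (96 : ℂ) * ((ψ g) ^ 1 * ((η g : ℂ)) ^ 1)) μ :=
      hint _ (by fun_prop)
    have i13 : Integrable (fun g : G => (8 : ℂ) * ((ψ g) ^ 1 * ((η g : ℂ)) ^ 3)) μ :=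
      hint _ (by fun_prop)
    have i20 : Integrable (fun g : G => (64 : ℂ) * ((ψ g) ^ 2 * ((η g : ℂ)) ^ 0)) μ :=
      hint _ (by fun_prop)
    have i22 : Integrable (fun g : G => (24 : ℂ) * ((ψ g) ^ 2 * ((η g : ℂ)) ^ 2)) μ :=
      hint _ (by fun_prop)
    have i31 : Integrable (fun g : G => (32 : ℂ) * ((ψ g) ^ 3 * ((η g : ℂ)) ^ 1)) μ :=
      hint _ (by fun_prop)
    have i40 : Integrable (fun g : G => (16 : ℂ) * ((ψ g) ^ 4 * ((η g : ℂ)) ^ 0)) μ :=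
      hint _ (by fun_prop)
    have j1 : Integrable (fun g : G => (96 : ℂ) * ((ψ g) ^ 1 * ((η g : ℂ)) ^ 1)
        + (8 : ℂ) * ((ψ g) ^ 1 * ((η g : ℂ)) ^ 3)) μ := i11.add i13
    have j2 : Integrable (fun g : G => (64 : ℂ) * ((ψ g) ^ 2 * ((η g : ℂ)) ^ 0)
        + (24 : ℂ) * ((ψ g) ^ 2 * ((η g : ℂ)) ^ 2)) μ := i20.add i22
    have j3 : Integrable (fun g : G => (32 : ℂ) * ((ψ g) ^ 3 * ((η g : ℂ)) ^ 1)
        + (16 : ℂ) * ((ψ g) ^ 4 * ((η g : ℂ)) ^ 0)) μ := i31.add i40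
    have j12 : Integrable (fun g : G => ((96 : ℂ) * ((ψ g) ^ 1 * ((η g : ℂ)) ^ 1)
        + (8 : ℂ) * ((ψ g) ^ 1 * ((η g : ℂ)) ^ 3))
        + ((64 : ℂ) * ((ψ g) ^ 2 * ((η g : ℂ)) ^ 0)
        + (24 : ℂ) * ((ψ g) ^ 2 * ((η g : ℂ)) ^ 2))) μ := j1.add j2
    simp only [hA]
    rw [integral_add j12 j3, integral_add j1 j2, integral_add i11 i13, integral_add i20 i22,
      integral_add i31 i40]
    simp only [integral_const_mul, e11, e13, e20, e22, e31, e40]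
    ring
  have hBint : ∫ g, B g ∂μ = 0 := by
    have e11 := hvanψbar 1 one_pos 1
    have e13 := hvanψbar 1 one_pos 3
    have e20 := hvanψbar 2 two_pos 0
    have e22 := hvanψbar 2 two_pos 2
    have e31 := hvanψbar 3 three_pos 1
    have e40 := hvanψbar 4 four_pos 0
    have i11 : Integrable (fun g : G => (96 : ℂ) * (((starRingEnd ℂ) (ψ g)) ^ 1 * ((η g : ℂ)) ^ 1)) μ :=
      hint _ (by fun_prop)
    have i13 : Integrable (fun g : G => (8 : ℂ) * (((starRingEnd ℂ) (ψ g)) ^ 1 * ((η g : ℂ)) ^ 3)) μ :=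
      hint _ (by fun_prop)
    have i20 : Integrable (fun g : G => (64 : ℂ) * (((starRingEnd ℂ) (ψ g)) ^ 2 * ((η g : ℂ)) ^ 0)) μ :=
      hint _ (by fun_prop)
    have i22 : Integrable (fun g : G => (24 : ℂ) * (((starRingEnd ℂ) (ψ g)) ^ 2 * ((η g : ℂ)) ^ 2)) μ :=
      hint _ (by fun_prop)
    have i31 : Integrable (fun g : G => (32 : ℂ) * (((starRingEnd ℂ) (ψ g)) ^ 3 * ((η g : ℂ)) ^ 1)) μ :=
      hint _ (by fun_prop)
    have i40 : Integrable (fun g : G => (16 : ℂ) * (((starRingEnd ℂ) (ψ g)) ^ 4 * ((η g : ℂ)) ^ 0)) μ :=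
      hint _ (by fun_prop)
    have j1 : Integrable (fun g : G => (96 : ℂ) * (((starRingEnd ℂ) (ψ g)) ^ 1 * ((η g : ℂ)) ^ 1)
        + (8 : ℂ) * (((starRingEnd ℂ) (ψ g)) ^ 1 * ((η g : ℂ)) ^ 3)) μ := i11.add i13
    have j2 : Integrable (fun g : G => (64 : ℂ) * (((starRingEnd ℂ) (ψ g)) ^ 2 * ((η g : ℂ)) ^ 0)
        + (24 : ℂ) * (((starRingEnd ℂ) (ψ g)) ^ 2 * ((η g : ℂ)) ^ 2)) μ := i20.add i22
    have j3 : Integrable (fun g : G => (32 : ℂ) * (((starRingEnd ℂ) (ψ g)) ^ 3 * ((η g : ℂ)) ^ 1)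
        + (16 : ℂ) * (((starRingEnd ℂ) (ψ g)) ^ 4 * ((η g : ℂ)) ^ 0)) μ := i31.add i40
    have j12 : Integrable (fun g : G => ((96 : ℂ) * (((starRingEnd ℂ) (ψ g)) ^ 1 * ((η g : ℂ)) ^ 1)
        + (8 : ℂ) * (((starRingEnd ℂ) (ψ g)) ^ 1 * ((η g : ℂ)) ^ 3))
        + ((64 : ℂ) * (((starRingEnd ℂ) (ψ g)) ^ 2 * ((η g : ℂ)) ^ 0)
        + (24 : ℂ) * (((starRingEnd ℂ) (ψ g)) ^ 2 * ((η g : ℂ)) ^ 2))) μ := j1.add j2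
    simp only [hB]
    rw [integral_add j12 j3, integral_add j1 j2, integral_add i11 i13, integral_add i20 i22,
      integral_add i31 i40]
    simp only [integral_const_mul, e11, e13, e20, e22, e31, e40]
    ring
  have hCint : ∫ g, C g ∂μ = 144 + ((∫ g, (η g) ^ 4 ∂μ : ℝ) : ℂ) := by
    have h2 : ∫ g, ((η g : ℂ)) ^ 2 ∂μ = 1 := by
      have he : ∀ g, ((η g : ℂ)) ^ 2 = (((η g ^ 2 : ℝ) : ℂ)) := by intro g; push_cast; ring
      calc ∫ g, ((η g : ℂ)) ^ 2 ∂μ = ((∫ g, (η g) ^ 2 ∂μ : ℝ) : ℂ) := by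
            rw [integral_congr_ae (Filter.Eventually.of_forall he)]
            exact integral_ofReal
        _ = 1 := by rw [hη2]; norm_num
    have h4 : ∫ g, ((η g : ℂ)) ^ 4 ∂μ = ((∫ g, (η g) ^ 4 ∂μ : ℝ) : ℂ) := by
      have he : ∀ g, ((η g : ℂ)) ^ 4 = (((η g ^ 4 : ℝ) : ℂ)) := by intro g; push_cast; ring
      rw [integral_congr_ae (Filter.Eventually.of_forall he)]
      exact integral_ofReal
    have i0 : Integrable (fun _ : G => (96 : ℂ)) μ := integrable_const _
    have i2 : Integrable (fun g : G => (48 : ℂ) * ((η g : ℂ)) ^ 2) μ := hint _ (by fun_prop)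
    have i4 : Integrable (fun g : G => ((η g : ℂ)) ^ 4) μ := hint _ (by fun_prop)
    have j02 : Integrable (fun g : G => (96 : ℂ) + (48 : ℂ) * ((η g : ℂ)) ^ 2) μ := i0.add i2
    simp only [hC]
    rw [integral_add j02 i4, integral_add i0 i2]
    simp only [integral_const_mul, h2, h4, integral_const, measure_univ, probReal_univ, ENNReal.toReal_one,
      one_smul]
    ring
  have hmain : ∫ g, (χ g) ^ 4 ∂μ = 144 + ((∫ g, (η g) ^ 4 ∂μ : ℝ) : ℂ) := by
    have iCA : Integrable (fun g : G => C g + A g) μ := (hint _ hCc).add (hint _ hAc)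
    rw [integral_congr_ae (Filter.Eventually.of_forall hpt),
      integral_add iCA (hint _ hBc), integral_add (hint _ hCc) (hint _ hAc),
      hAint, hBint, hCint]
    ring
  have hη4le : ∫ g, (η g) ^ 4 ∂μ ≤ 16 := by
    have hle : ∀ g, (η g) ^ 4 ≤ (16 : ℝ) := by
      intro g
      obtain ⟨h1, h2⟩ := abs_le.mp (hηb g)
      have hsq : (η g) ^ 2 ≤ 4 := by nlinarith
      nlinarith [sq_nonneg (η g)]
    calc ∫ g, (η g) ^ 4 ∂μ ≤ ∫ _, (16 : ℝ) ∂μ := by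
          refine integral_mono ?_ (integrable_const _) hle
          exact (Continuous.integrable_of_hasCompactSupport (by fun_prop)
            (HasCompactSupport.of_compactSpace _))
      _ = 16 := by simp
  have hre : (∫ g, (χ g) ^ 4 ∂μ).re ≤ 160 := by
    rw [hmain]
    simp only [Complex.add_re, Complex.ofReal_re]
    have h144 : ((144 : ℂ)).re = 144 := by norm_num
    rw [h144]
    linarith
  refine ⟨hmain, hre, ?_⟩
  intro h
  rw [h] at hre
  norm_num at hre
end
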